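/- ISTA step remains feasible and decreases the objective sufficiently: for a convex function F = g + h with g convex lower semicontinuous and h convex differentiable with L-Lipschitz gradient, one step of the proximal gradient method α⁺ = prox_{(1/L)g}(α − (1/L)∇h(α)) satisfies F(α⁺) ≤ F(β) + (L/2)‖β − α‖² − (L/2)‖β − α⁺‖² for all β in the domain; in particular F(α⁺) ≤ F(α). -/

import Mathlib

open InnerProductSpace Set

private lemma line_hasDerivAt' {E : Type*} [NormedAddCommGroup E] [InnerProductSpace ℝ E]
    [CompleteSpace E]
    (h : E → ℝ) (G : E → E) (hgrad : ∀ x, HasGradientAt h (G x) x) (x v : E) (t : ℝ) :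
    HasDerivAt (fun s : ℝ => h (x + s • v)) ⟪G (x + t • v), v⟫_ℝ t := by
  have h1 : HasDerivAt (fun s : ℝ => x + s • v) v t := by
    simpa using ((hasDerivAt_id t).smul_const v).const_add x
  have h2 := (hgrad (x + t • v)).hasFDerivAt
  have h3 := h2.comp_hasDerivAt t h1
  simp at h3
  exact h3

private lemma norm_combo' {E : Type*} [NormedAddCommGroup E] [InnerProductSpace ℝ E]
    (a b : E) (t : ℝ) :
    ‖(1 - t) • a + t • b‖ ^ 2 = (1 - t) * ‖a‖ ^ 2 + t * ‖b‖ ^ 2 - t * (1 - t) * ‖a - b‖ ^ 2 := by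
  have e : ∀ x : E, ‖x‖ ^ 2 = ⟪x, x⟫_ℝ := fun x => (real_inner_self_eq_norm_sq x).symm
  simp only [e, inner_add_add_self, inner_sub_sub_self, real_inner_smul_left,
    real_inner_smul_right, real_inner_comm a b]
  ring

/-- Descent lemma for L-Lipschitz gradient. -/
private lemma descent_lemma' {E : Type*} [NormedAddCommGroup E] [InnerProductSpace ℝ E]
    [CompleteSpace E]
    (h : E → ℝ) (G : E → E) (hgrad : ∀ x, HasGradientAt h (G x) x)
    (L : ℝ) (hL : 0 < L) (hLip : ∀ x y, ‖G x - G y‖ ≤ L * ‖x - y‖) (x y : E) :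
    h y ≤ h x + ⟪G x, y - x⟫_ℝ + L / 2 * ‖y - x‖ ^ 2 := by
  set v := y - x with hv
  set c := ⟪G x, v⟫_ℝ with hc
  set f : ℝ → ℝ := fun t => h (x + t • v) - t * c - (L / 2 * ‖v‖ ^ 2) * t ^ 2 with hf
  have hd : ∀ t : ℝ, HasDerivAt f
      (⟪G (x + t • v), v⟫_ℝ - c - (L / 2 * ‖v‖ ^ 2) * (2 * t ^ 1)) t := by
    intro t
    have h1 := line_hasDerivAt' h G hgrad x v t
    have h2 : HasDerivAt (fun t : ℝ => t * c) c t := by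
      simpa using (hasDerivAt_id t).mul_const c
    have h3 : HasDerivAt (fun t : ℝ => (L / 2 * ‖v‖ ^ 2) * t ^ 2)
        ((L / 2 * ‖v‖ ^ 2) * (2 * t ^ 1)) t := (hasDerivAt_pow 2 t).const_mul _
    exact (h1.sub h2).sub h3
  have mono : AntitoneOn f (Icc 0 1) := by
    apply antitoneOn_of_deriv_nonpos (convex_Icc 0 1)
    · exact fun t _ => ((hd t).differentiableAt.continuousAt).continuousWithinAt
    · exact fun t _ => (hd t).differentiableAt.differentiableWithinAt
    · intro t ht
      rw [interior_Icc] at ht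
      rw [(hd t).deriv]
      have hb := real_inner_le_norm (G (x + t • v) - G x) v
      have hl := hLip (x + t • v) x
      have hsub : x + t • v - x = t • v := by abel
      rw [hsub, norm_smul, Real.norm_eq_abs, abs_of_pos ht.1] at hl
      rw [inner_sub_left] at hb
      nlinarith [norm_nonneg v, norm_nonneg (G (x + t • v) - G x), ht.1.le]
  have hle := mono (left_mem_Icc.2 zero_le_one) (right_mem_Icc.2 zero_le_one) zero_le_one
  have h0 : f 0 = h x := by simp [hf]
  have h1 : f 1 = h y - c - L / 2 * ‖v‖ ^ 2 := by
    have : x + (1 : ℝ) • v = y := by simp [hv]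
    simp only [hf, this, one_pow, mul_one, one_mul, hc]
  rw [h0, h1] at hle
  linarith

/-- Gradient inequality for convex functions. -/
private lemma convex_grad' {E : Type*} [NormedAddCommGroup E] [InnerProductSpace ℝ E]
    [CompleteSpace E] {S : Set E} (hS : Convex ℝ S)
    (h : E → ℝ) (hh : ConvexOn ℝ S h) (G : E → E) (hgrad : ∀ x, HasGradientAt h (G x) x)
    {a b : E} (ha : a ∈ S) (hb : b ∈ S) :
    ⟪G a, b - a⟫_ℝ ≤ h b - h a := by
  set v := b - a with hv
  have hq : HasDerivAt (fun t : ℝ => h (a + t • v)) ⟪G a, v⟫_ℝ 0 := by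
    simpa using line_hasDerivAt' h G hgrad a v 0
  have T : Filter.Tendsto (slope (fun t : ℝ => h (a + t • v)) 0) (nhdsWithin 0 (Ioi 0))
      (nhds ⟪G a, v⟫_ℝ) :=
    (hasDerivAt_iff_tendsto_slope.1 hq).mono_left
      (nhdsWithin_mono _ (fun t ht => ne_of_gt ht))
  refine le_of_tendsto T ?_
  filter_upwards [Ioc_mem_nhdsGT_of_mem (left_mem_Ico.2 one_pos)] with t ht
  have hcomb : a + t • v = (1 - t) • a + t • b := by
    simp [hv, smul_sub, sub_smul]; abel
  have hcvx : h (a + t • v) ≤ (1 - t) * h a + t * h b := by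
    rw [hcomb]
    exact hh.2 ha hb (by linarith [ht.2]) ht.1.le (by ring)
  have h0 : a + (0 : ℝ) • v = a := by simp
  rw [slope_def_field, div_le_iff₀ (by simpa using ht.1)]
  rw [h0] at *
  nlinarith [ht.1]


/-- Descent property of one proximal-gradient (ISTA) step: for `F = g + h` with `g` convex
lower semicontinuous (proper on its domain `S`) and `h` convex with `L`-Lipschitz gradient,
the step `α⁺ = prox_{(1/L)g}(α − (1/L)∇h(α))` satisfies
`F(α⁺) ≤ F(β) + (L/2)‖β − α‖² − (L/2)‖β − α⁺‖²` for all `β ∈ S`; in particular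
`F(α⁺) ≤ F(α)`. -/
theorem ista_step_descent {E : Type*} [NormedAddCommGroup E] [InnerProductSpace ℝ E]
    [CompleteSpace E] (S : Set E) (hS : Convex ℝ S)
    (g h F : E → ℝ) (hF : ∀ x, F x = g x + h x)
    (hg : ConvexOn ℝ S g) (hglsc : LowerSemicontinuousOn g S)
    (hh : ConvexOn ℝ S h)
    (G : E → E) (hgrad : ∀ x, HasGradientAt h (G x) x)
    (L : ℝ) (hL : 0 < L) (hLip : ∀ x y, ‖G x - G y‖ ≤ L * ‖x - y‖)
    (α : E) (hα : α ∈ S) (αp : E) (hαp : αp ∈ S)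
    (hprox : ∀ β ∈ S,
      g αp + L / 2 * ‖αp - (α - L⁻¹ • G α)‖ ^ 2 ≤ g β + L / 2 * ‖β - (α - L⁻¹ • G α)‖ ^ 2) :
    (∀ β ∈ S, F αp ≤ F β + L / 2 * ‖β - α‖ ^ 2 - L / 2 * ‖β - αp‖ ^ 2) ∧ F αp ≤ F α := by
  
  set u := α - L⁻¹ • G α with hu
  have expand : ∀ x : E, L / 2 * ‖x - u‖ ^ 2
      = L / 2 * ‖x - α‖ ^ 2 + ⟪x - α, G α⟫_ℝ + (2 * L)⁻¹ * ‖G α‖ ^ 2 := by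
    intro x
    have e : ∀ y : E, ‖y‖ ^ 2 = ⟪y, y⟫_ℝ := fun y => (real_inner_self_eq_norm_sq y).symm
    have hx : x - u = (x - α) + L⁻¹ • G α := by rw [hu]; abel
    rw [hx]
    simp only [e, inner_add_add_self, real_inner_smul_left, real_inner_smul_right,
      real_inner_comm (G α) (x - α)]
    field_simp
    ring
  have strong : ∀ β ∈ S, g αp + L / 2 * ‖αp - u‖ ^ 2
      ≤ g β + L / 2 * ‖β - u‖ ^ 2 - L / 2 * ‖αp - β‖ ^ 2 := by
    intro β hβ
    have key : ∀ t ∈ Ioc (0:ℝ) 1, g αp + L / 2 * ‖αp - u‖ ^ 2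
        ≤ g β + L / 2 * ‖β - u‖ ^ 2 - L / 2 * (1 - t) * ‖αp - β‖ ^ 2 := by
      intro t ht
      have hx : (1 - t) • αp + t • β ∈ S := hS hαp hβ (by linarith [ht.2]) ht.1.le (by ring)
      have h1 := hprox _ hx
      have h2 : g ((1 - t) • αp + t • β) ≤ (1 - t) * g αp + t * g β := by
        have := hg.2 hαp hβ (show (0:ℝ) ≤ 1 - t by linarith [ht.2]) ht.1.le (by ring)
        simpa using this
      have h3 : ((1 - t) • αp + t • β) - u = (1 - t) • (αp - u) + t • (β - u) := by
        rw [smul_sub, smul_sub]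
        module
      rw [h3, norm_combo'] at h1
      have h4 : (αp - u) - (β - u) = αp - β := by abel
      rw [h4] at h1
      have h5 : t * (g αp + L / 2 * ‖αp - u‖ ^ 2)
          ≤ t * (g β + L / 2 * ‖β - u‖ ^ 2 - L / 2 * (1 - t) * ‖αp - β‖ ^ 2) := by
        nlinarith [h1, h2, ht.1, ht.2]
      exact (mul_le_mul_iff_right₀ ht.1).1 h5
    have Tlim : Filter.Tendsto
        (fun t : ℝ => g β + L / 2 * ‖β - u‖ ^ 2 - L / 2 * (1 - t) * ‖αp - β‖ ^ 2)
        (nhdsWithin 0 (Ioi 0))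
        (nhds (g β + L / 2 * ‖β - u‖ ^ 2 - L / 2 * ‖αp - β‖ ^ 2)) := by
      have hc : Continuous
          (fun t : ℝ => g β + L / 2 * ‖β - u‖ ^ 2 - L / 2 * (1 - t) * ‖αp - β‖ ^ 2) := by
        fun_prop
      have := (hc.tendsto 0).mono_left (nhdsWithin_le_nhds (s := Ioi (0:ℝ)))
      simpa using this
    refine ge_of_tendsto Tlim ?_
    filter_upwards [Ioc_mem_nhdsGT_of_mem (left_mem_Ico.2 one_pos)] with t ht using key t ht
  have main : ∀ β ∈ S, F αp ≤ F β + L / 2 * ‖β - α‖ ^ 2 - L / 2 * ‖β - αp‖ ^ 2 := by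
    intro β hβ
    have hstrong := strong β hβ
    rw [expand αp, expand β] at hstrong
    have hdesc := descent_lemma' h G hgrad L hL hLip α αp
    have hconv := convex_grad' hS h hh G hgrad hα hβ
    have e1 : ⟪αp - α, G α⟫_ℝ = ⟪G α, αp - α⟫_ℝ := real_inner_comm _ _
    have e2 : ⟪β - α, G α⟫_ℝ = ⟪G α, β - α⟫_ℝ := real_inner_comm _ _
    have e3 : ‖β - αp‖ = ‖αp - β‖ := norm_sub_rev _ _
    rw [hF αp, hF β, e3]
    rw [e1, e2] at hstrong
    linarith
  refine ⟨main, ?_⟩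
  have h2 := main α hα
  simp only [sub_self, norm_zero] at h2
  have h3 : 0 ≤ L / 2 * ‖α - αp‖ ^ 2 := by positivity
  calc F αp ≤ F α + L / 2 * 0 ^ 2 - L / 2 * ‖α - αp‖ ^ 2 := h2
    _ ≤ F α := by nlinarith
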